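/- For each 1 ≤ k ≤ m, define θ_k on ℬ_k as follows: for (ℬ, Δ) ∈ ℬ_k, let Δ′ be the unique region of 𝒜_kᶜ/(ℬ − {H_k}) containing Δ; set θ_k(ℬ, Δ) = (ℬ − {H_k}, Δ′ ∩ H_k⁺) if Δ ⊆ H_k; θ_k(ℬ, Δ) = (ℬ, Δ) if Δ ∩ H_k = ∅; θ_k(ℬ, Δ) = (ℬ, Δ′ ∩ H_k⁻) if Δ ∩ H_k ≠ ∅ and Δ ⊄ H_k. Then θ_k maps ℬ_k into ℬ_{k−1} and is a two-sided inverse of φ_k: θ_k(φ_k(ℬ, Δ)) = (ℬ, Δ) for all (ℬ, Δ) ∈ ℬ_{k−1} and φ_k(θ_k(ℬ, Δ)) = (ℬ, Δ) for all (ℬ, Δ) ∈ ℬ_k. -/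

import Mathlib

open Set

/-- An affine hyperplane in `ℝⁿ`, given by a nonzero normal vector `a` and
a constant `b`: the hyperplane is `{x : ⟨a, x⟩ = b}`. -/
structure Hyp (n : ℕ) where
  a : Fin n → ℝ
  b : ℝ
  ha : a ≠ 0

/-- The hyperplane itself, as a subset of `ℝⁿ`. -/
def Hyp.carrier {n : ℕ} (H : Hyp n) : Set (Fin n → ℝ) := {x | ∑ i, H.a i * x i = H.b}

/-- The positive open side of a hyperplane. -/
def Hyp.pos {n : ℕ} (H : Hyp n) : Set (Fin n → ℝ) := {x | H.b < ∑ i, H.a i * x i}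

/-- The negative open side of a hyperplane. -/
def Hyp.neg {n : ℕ} (H : Hyp n) : Set (Fin n → ℝ) := {x | ∑ i, H.a i * x i < H.b}

/-- The intersection `⋂ℬ` of the hyperplanes indexed by `S` (`ℝⁿ` if `S = ∅`). -/
def interA {n m : ℕ} (H : Fin m → Hyp n) (S : Finset (Fin m)) : Set (Fin n → ℝ) :=
  ⋂ i ∈ S, (H i).carrier

/-- The dimension of an affine subset of `ℝⁿ` (the rank of its vector span). -/
noncomputable def adim {n : ℕ} (s : Set (Fin n → ℝ)) : ℕ :=
  Module.finrank ℝ (vectorSpan ℝ s)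

/-- The defining property of an affine circuit: `⋂ℬ ≠ ∅` and `dim(⋂ℬ) + |ℬ| = n + 1`. -/
def CircuitProp {n m : ℕ} (H : Fin m → Hyp n) (S : Finset (Fin m)) : Prop :=
  (interA H S).Nonempty ∧ adim (interA H S) + S.card = n + 1

/-- An affine circuit: an inclusion-minimal `S` with `⋂S ≠ ∅` and `dim(⋂S) + |S| = n + 1`. -/
def IsAffCircuit {n m : ℕ} (H : Fin m → Hyp n) (S : Finset (Fin m)) : Prop :=
  CircuitProp H S ∧ ∀ T ⊂ S, ¬ CircuitProp H T

/-- An affine NBC subset: `⋂S ≠ ∅` and `S` contains no affine broken circuit, i.e. no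
affine circuit with its maximal element deleted. -/
def IsAffNBC {n m : ℕ} (H : Fin m → Hyp n) (S : Finset (Fin m)) : Prop :=
  (interA H S).Nonempty ∧
    ∀ T : Finset (Fin m), IsAffCircuit H T → ∀ h : T.Nonempty, ¬ T.erase (T.max' h) ⊆ S

/-- `Δ` is a region of the open set `U`, i.e. a connected component of `U`. -/
def IsRegionIn {n : ℕ} (U Δ : Set (Fin n → ℝ)) : Prop :=
  ∃ x ∈ U, Δ = connectedComponentIn U x

/-- The set of regions of the arrangement `H`: connected components of the complement
of the union of the hyperplanes. -/
def regions {n m : ℕ} (H : Fin m → Hyp n) : Set (Set (Fin n → ℝ)) :=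
  {Δ | IsRegionIn (Set.univ \ ⋃ i, (H i).carrier) Δ}

/-- `𝒜_k = {H₁, …, H_k}`, as a set of indices. -/
def Ak (m k : ℕ) : Finset (Fin m) := Finset.filter (fun i => (i : ℕ) < k) Finset.univ

/-- The underlying open set of the restriction `𝒜_kᶜ/ℬ`: the affine subspace `⋂ℬ`
minus the traces `(⋂ℬ) ∩ H` of those hyperplanes `H ∈ 𝒜_kᶜ` with
`∅ ≠ (⋂ℬ) ∩ H ⊊ ⋂ℬ`; its connected components are the regions of `𝒜_kᶜ/ℬ`. -/
def restCompl {n m : ℕ} (H : Fin m → Hyp n) (k : ℕ) (S : Finset (Fin m)) :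
    Set (Fin n → ℝ) :=
  interA H S \
    ⋃ i ∈ {i : Fin m | k ≤ (i : ℕ) ∧ (interA H S ∩ (H i).carrier).Nonempty ∧
        interA H S ∩ (H i).carrier ≠ interA H S}, (H i).carrier

/-- The set `ℬ_k` of pairs `(ℬ, Δ)` with `ℬ ⊆ 𝒜_k` an affine NBC subset of `𝒜`
and `Δ` a region of `𝒜_kᶜ/ℬ`. -/
def BFam {n m : ℕ} (H : Fin m → Hyp n) (k : ℕ) :
    Set (Finset (Fin m) × Set (Fin n → ℝ)) :=
  {p | p.1 ⊆ Ak m k ∧ IsAffNBC H p.1 ∧ IsRegionIn (restCompl H k p.1) p.2}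

/-- The union of the connected components of `U` meeting `Δ`; when `Δ` is a nonempty
connected subset of `U` this is the unique region of `U` containing `Δ`. -/
def compIn {n : ℕ} (U Δ : Set (Fin n → ℝ)) : Set (Fin n → ℝ) :=
  ⋃ x ∈ Δ, connectedComponentIn U x

open scoped Classical in
/-- The map `φ_k` (with `e = H_k`): for `(ℬ, Δ) ∈ ℬ_{k−1}`, letting `Δ′` be the unique
region of `𝒜_kᶜ/ℬ` containing `Δ`,
`φ_k(ℬ, Δ) = (ℬ ∪ {H_k}, Δ′ ∩ H_k)` if `Δ ⊆ H_k⁺` and `Δ ≠ Δ′`,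
`φ_k(ℬ, Δ) = (ℬ, Δ)` if `Δ ⊆ H_k⁺` and `Δ = Δ′`, and
`φ_k(ℬ, Δ) = (ℬ, Δ′)` if `Δ ⊆ H_k⁻`. -/
noncomputable def phi {n m : ℕ} (H : Fin m → Hyp n) (k : ℕ) (e : Fin m)
    (p : Finset (Fin m) × Set (Fin n → ℝ)) : Finset (Fin m) × Set (Fin n → ℝ) :=
  if p.2 ⊆ (H e).pos ∧ p.2 ≠ compIn (restCompl H k p.1) p.2 then
    (insert e p.1, compIn (restCompl H k p.1) p.2 ∩ (H e).carrier)
  else if p.2 ⊆ (H e).pos ∧ p.2 = compIn (restCompl H k p.1) p.2 then p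
  else if p.2 ⊆ (H e).neg then (p.1, compIn (restCompl H k p.1) p.2)
  else p

open scoped Classical in
/-- The map `θ_k` (with `e = H_k`): for `(ℬ, Δ) ∈ ℬ_k`, letting `Δ′` be the unique
region of `𝒜_kᶜ/(ℬ − {H_k})` containing `Δ`,
`θ_k(ℬ, Δ) = (ℬ − {H_k}, Δ′ ∩ H_k⁺)` if `Δ ⊆ H_k`,
`θ_k(ℬ, Δ) = (ℬ, Δ)` if `Δ ∩ H_k = ∅`, and
`θ_k(ℬ, Δ) = (ℬ, Δ′ ∩ H_k⁻)` if `Δ ∩ H_k ≠ ∅` and `Δ ⊄ H_k`. -/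
noncomputable def thetaA {n m : ℕ} (H : Fin m → Hyp n) (k : ℕ) (e : Fin m)
    (p : Finset (Fin m) × Set (Fin n → ℝ)) : Finset (Fin m) × Set (Fin n → ℝ) :=
  if p.2 ⊆ (H e).carrier then
    (p.1.erase e, compIn (restCompl H k (p.1.erase e)) p.2 ∩ (H e).pos)
  else if p.2 ∩ (H e).carrier = ∅ then p
  else (p.1, compIn (restCompl H k (p.1.erase e)) p.2 ∩ (H e).neg)

namespace Arr
variable {n m : ℕ}

def Fh (Hi : Hyp n) : (Fin n → ℝ) →ₗ[ℝ] ℝ where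
  toFun x := ∑ i, Hi.a i * x i
  map_add' x y := by simp [mul_add, Finset.sum_add_distrib]
  map_smul' c x := by
    simp only [Pi.smul_apply, smul_eq_mul, RingHom.id_apply, Finset.mul_sum]
    exact Finset.sum_congr rfl fun i _ => by ring

lemma Fh_cont (Hi : Hyp n) : Continuous (Fh Hi) := (Fh Hi).continuous_of_finiteDimensional

lemma mem_carrier {Hi : Hyp n} {x} : x ∈ Hi.carrier ↔ Fh Hi x = Hi.b := Iff.rfl
lemma mem_pos {Hi : Hyp n} {x} : x ∈ Hi.pos ↔ Hi.b < Fh Hi x := Iff.rfl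
lemma mem_neg {Hi : Hyp n} {x} : x ∈ Hi.neg ↔ Fh Hi x < Hi.b := Iff.rfl

lemma isOpen_pos (Hi : Hyp n) : IsOpen Hi.pos := isOpen_lt continuous_const (Fh_cont Hi)
lemma isOpen_neg (Hi : Hyp n) : IsOpen Hi.neg := isOpen_lt (Fh_cont Hi) continuous_const
lemma convex_pos (Hi : Hyp n) : Convex ℝ Hi.pos := convex_halfSpace_gt (Fh Hi).isLinear _
lemma convex_neg (Hi : Hyp n) : Convex ℝ Hi.neg := convex_halfSpace_lt (Fh Hi).isLinear _
lemma convex_carrier (Hi : Hyp n) : Convex ℝ Hi.carrier := convex_hyperplane (Fh Hi).isLinear _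

open scoped Classical in
noncomputable def sd (Hi : Hyp n) (x : Fin n → ℝ) : Set (Fin n → ℝ) :=
  if Hi.b < Fh Hi x then Hi.pos else Hi.neg

lemma isOpen_sd (Hi : Hyp n) (x) : IsOpen (sd Hi x) := by
  unfold sd; split <;> [exact isOpen_pos Hi; exact isOpen_neg Hi]
lemma convex_sd (Hi : Hyp n) (x) : Convex ℝ (sd Hi x) := by
  unfold sd; split <;> [exact convex_pos Hi; exact convex_neg Hi]

lemma mem_sd_self {Hi : Hyp n} {x} (hx : Fh Hi x ≠ Hi.b) : x ∈ sd Hi x := by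
  unfold sd; split
  · assumption
  · exact lt_of_le_of_ne (not_lt.1 ‹_›) hx

lemma sd_ne_of_mem {Hi : Hyp n} {x y} (hy : y ∈ sd Hi x) : Fh Hi y ≠ Hi.b := by
  unfold sd at hy; split at hy
  · exact ne_of_gt hy
  · exact ne_of_lt hy

lemma sd_eq_of_mem {Hi : Hyp n} {x y} (hy : y ∈ sd Hi x) : sd Hi y = sd Hi x := by
  unfold sd at *; split at hy <;> split <;> first | rfl | (exfalso; first
    | exact ‹¬ _› hy | exact absurd ‹Hi.b < Fh Hi y› (not_lt.2 (le_of_lt hy)))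

lemma sd_pos_of {Hi : Hyp n} {x} (hx : Hi.b < Fh Hi x) : sd Hi x = Hi.pos := if_pos hx
lemma sd_neg_of {Hi : Hyp n} {x} (hx : Fh Hi x < Hi.b) : sd Hi x = Hi.neg :=
  if_neg (not_lt.2 hx.le)

/-- a preconnected set avoiding the hyperplane lies on one side. -/
lemma preconn_subset_sd {Hi : Hyp n} {Δ : Set (Fin n → ℝ)} (hΔ : IsPreconnected Δ)
    (hne : ∀ y ∈ Δ, Fh Hi y ≠ Hi.b) {x} (hx : x ∈ Δ) : Δ ⊆ sd Hi x := by
  have hsub : Δ ⊆ Hi.pos ∪ Hi.neg := by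
    intro y hy
    rcases Ne.lt_or_gt (hne y hy) with h | h
    · exact Or.inr h
    · exact Or.inl h
  have hdis : Disjoint Hi.pos Hi.neg := by
    rw [Set.disjoint_left]
    intro z hz1 hz2
    exact absurd ((mem_pos.1 hz1).trans (mem_neg.1 hz2)) (lt_irrefl _)
  rcases Ne.lt_or_gt (hne x hx) with h | h
  · rw [sd_neg_of h]
    refine hΔ.subset_left_of_subset_union (isOpen_neg Hi) (isOpen_pos Hi) hdis.symm ?_ ⟨x, hx, h⟩
    intro y hy
    rcases Ne.lt_or_gt (hne y hy) with hlt | hlt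
    · exact Or.inl hlt
    · exact Or.inr hlt
  · rw [sd_pos_of h]
    refine hΔ.subset_left_of_subset_union (isOpen_pos Hi) (isOpen_neg Hi) hdis ?_ ⟨x, hx, h⟩
    intro y hy
    rcases Ne.lt_or_gt (hne y hy) with hlt | hlt
    · exact Or.inr hlt
    · exact Or.inl hlt

def hsd (H : Fin m → Hyp n) (R : Set (Fin m)) (x : Fin n → ℝ) : Set (Fin n → ℝ) :=
  ⋂ i ∈ R, sd (H i) x

lemma isOpen_hsd (H : Fin m → Hyp n) (R : Set (Fin m)) (x) : IsOpen (hsd H R x) :=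
  (Set.toFinite R).isOpen_biInter fun i _ => isOpen_sd (H i) x

lemma convex_hsd (H : Fin m → Hyp n) (R : Set (Fin m)) (x) : Convex ℝ (hsd H R x) :=
  convex_iInter fun i => convex_iInter fun _ => convex_sd (H i) x

lemma mem_interA {H : Fin m → Hyp n} {S : Finset (Fin m)} {x} :
    x ∈ interA H S ↔ ∀ i ∈ S, Fh (H i) x = (H i).b := by
  simp [interA, mem_carrier]

lemma interA_antitone {H : Fin m → Hyp n} {S T : Finset (Fin m)} (h : S ⊆ T) :
    interA H T ⊆ interA H S := fun x hx => by
  rw [mem_interA] at *; exact fun i hi => hx i (h hi)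

lemma interA_insert {H : Fin m → Hyp n} {S : Finset (Fin m)} {e : Fin m} :
    interA H (insert e S) = (H e).carrier ∩ interA H S := by
  ext x; simp [mem_interA, mem_carrier]

lemma convex_interA (H : Fin m → Hyp n) (S : Finset (Fin m)) : Convex ℝ (interA H S) :=
  convex_iInter fun i => convex_iInter fun _ => convex_carrier (H i)

lemma interA_line {H : Fin m → Hyp n} {S : Finset (Fin m)} {x w} (hx : x ∈ interA H S)
    (hw : w ∈ interA H S) (t : ℝ) : x + t • (w - x) ∈ interA H S := by
  rw [mem_interA] at *
  intro i hi
  simp only [map_add, map_smul, map_sub, smul_eq_mul, hx i hi, hw i hi]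
  ring

lemma Fh_line (Hi : Hyp n) (x w : Fin n → ℝ) (t : ℝ) :
    Fh Hi (x + t • (w - x)) = Fh Hi x + t * (Fh Hi w - Fh Hi x) := by
  simp [map_add, map_smul, map_sub]

/-- characterization of connected components of `interA \ ⋃ hyperplanes`. -/
theorem cc_eq (H : Fin m → Hyp n) (S : Finset (Fin m)) (R : Set (Fin m)) (x : Fin n → ℝ)
    (hx : x ∈ interA H S \ ⋃ i ∈ R, (H i).carrier) :
    connectedComponentIn (interA H S \ ⋃ i ∈ R, (H i).carrier) x
      = interA H S ∩ hsd H R x := by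
  have hxne : ∀ i ∈ R, Fh (H i) x ≠ (H i).b := by
    intro i hiR h
    exact hx.2 (Set.mem_biUnion hiR h)
  apply Set.Subset.antisymm
  · intro y hy
    have hyU := connectedComponentIn_subset _ _ hy
    refine ⟨hyU.1, ?_⟩
    rw [hsd, Set.mem_iInter₂]
    intro i hiR
    refine preconn_subset_sd (isPreconnected_connectedComponentIn) ?_
      (mem_connectedComponentIn hx) hy
    intro z hz h
    exact (connectedComponentIn_subset _ _ hz).2 (Set.mem_biUnion hiR h)
  · have hsubU : interA H S ∩ hsd H R x ⊆ interA H S \ ⋃ i ∈ R, (H i).carrier := by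
      rintro y ⟨hy1, hy2⟩
      refine ⟨hy1, ?_⟩
      intro hy3
      rcases Set.mem_iUnion₂.1 hy3 with ⟨i, hiR, hyc⟩
      rw [hsd, Set.mem_iInter₂] at hy2
      exact sd_ne_of_mem (hy2 i hiR) hyc
    refine IsPreconnected.subset_connectedComponentIn ?_ ?_ hsubU
    · exact ((convex_interA H S).inter (convex_hsd H R x)).isPreconnected
    · exact ⟨hx.1, Set.mem_iInter₂.2 fun i hiR => mem_sd_self (hxne i hiR)⟩

/-! ### compIn, perturbation, restCompl -/

lemma compIn_eq {U Γ : Set (Fin n → ℝ)} {x : Fin n → ℝ} (hΓ : Γ.Nonempty)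
    (hsub : Γ ⊆ connectedComponentIn U x) : compIn U Γ = connectedComponentIn U x := by
  obtain ⟨y₀, hy₀⟩ := hΓ
  apply Set.Subset.antisymm
  · exact Set.iUnion₂_subset fun y hy => le_of_eq (connectedComponentIn_eq (hsub hy)).symm
  · intro z hz
    exact Set.mem_biUnion hy₀ ((connectedComponentIn_eq (hsub hy₀)) ▸ hz)

lemma exists_pt_side {H : Fin m → Hyp n} {S : Finset (Fin m)} {O : Set (Fin n → ℝ)}
    (hO : IsOpen O) {x w : Fin n → ℝ} (hxS : x ∈ interA H S) (hxO : x ∈ O)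
    (hwS : w ∈ interA H S) {e : Fin m} (hxe : Fh (H e) x = (H e).b)
    (hwe : Fh (H e) w ≠ (H e).b) :
    (∃ y ∈ interA H S ∩ O, (H e).b < Fh (H e) y) ∧
      (∃ y ∈ interA H S ∩ O, Fh (H e) y < (H e).b) := by
  have hγ : Continuous (fun t : ℝ => x + t • (w - x)) :=
    continuous_const.add (continuous_id.smul continuous_const)
  obtain ⟨ε, hε, hball⟩ := Metric.isOpen_iff.1 (hO.preimage hγ) 0 (by
    simp only [Set.mem_preimage, zero_smul, add_zero]; exact hxO)
  set d := Fh (H e) w - (H e).b with hd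
  have hdne : d ≠ 0 := sub_ne_zero.2 hwe
  have key : ∀ t : ℝ, |t| < ε → (x + t • (w - x) ∈ interA H S ∩ O ∧
      Fh (H e) (x + t • (w - x)) = (H e).b + t * d) := by
    intro t ht
    have htb : t ∈ Metric.ball (0:ℝ) ε := by
      rw [Metric.mem_ball, Real.dist_0_eq_abs]; exact ht
    refine ⟨⟨interA_line hxS hwS t, hball htb⟩, ?_⟩
    rw [Fh_line, hxe, hd]
  rcases hdne.lt_or_gt with hdlt | hdlt
  · constructor
    · obtain ⟨hy, hv⟩ := key (-(ε/2)) (by rw [abs_neg, abs_of_pos (by positivity)]; linarith)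
      exact ⟨_, hy, by rw [hv]; nlinarith⟩
    · obtain ⟨hy, hv⟩ := key (ε/2) (by rw [abs_of_pos (by positivity)]; linarith)
      exact ⟨_, hy, by rw [hv]; nlinarith⟩
  · constructor
    · obtain ⟨hy, hv⟩ := key (ε/2) (by rw [abs_of_pos (by positivity)]; linarith)
      exact ⟨_, hy, by rw [hv]; nlinarith⟩
    · obtain ⟨hy, hv⟩ := key (-(ε/2)) (by rw [abs_neg, abs_of_pos (by positivity)]; linarith)
      exact ⟨_, hy, by rw [hv]; nlinarith⟩

lemma interA_subset_carrier {H : Fin m → Hyp n} {S : Finset (Fin m)} {O : Set (Fin n → ℝ)}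
    (hO : IsOpen O) {x : Fin n → ℝ} (hxS : x ∈ interA H S) (hxO : x ∈ O) {e : Fin m}
    (hsub : interA H S ∩ O ⊆ (H e).carrier) : interA H S ⊆ (H e).carrier := by
  intro w hw
  by_contra hwe
  have hxe : Fh (H e) x = (H e).b := mem_carrier.1 (hsub ⟨hxS, hxO⟩)
  obtain ⟨⟨y, hy, hygt⟩, -⟩ := exists_pt_side hO hxS hxO hw hxe hwe
  exact (ne_of_gt hygt) (mem_carrier.1 (hsub hy))

def Rset (H : Fin m → Hyp n) (k : ℕ) (S : Finset (Fin m)) : Set (Fin m) :=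
  {i : Fin m | k ≤ (i : ℕ) ∧ (interA H S ∩ (H i).carrier).Nonempty ∧
      interA H S ∩ (H i).carrier ≠ interA H S}

lemma restCompl_eq (H : Fin m → Hyp n) (k : ℕ) (S : Finset (Fin m)) :
    restCompl H k S = interA H S \ ⋃ i ∈ Rset H k S, (H i).carrier := rfl

theorem cc_restCompl {H : Fin m → Hyp n} {k : ℕ} {S : Finset (Fin m)} {x}
    (hx : x ∈ restCompl H k S) :
    connectedComponentIn (restCompl H k S) x = interA H S ∩ hsd H (Rset H k S) x := by
  rw [restCompl_eq] at *
  exact cc_eq H S _ x hx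

/-- `H e` is active on `S`: its trace on `⋂ S` is nonempty and proper. -/
def eact (H : Fin m → Hyp n) (e : Fin m) (S : Finset (Fin m)) : Prop :=
  (interA H S ∩ (H e).carrier).Nonempty ∧ interA H S ∩ (H e).carrier ≠ interA H S

lemma e_not_mem_Rset {H : Fin m → Hyp n} {k : ℕ} (hk1 : 1 ≤ k) {e : Fin m}
    (he : (e : ℕ) = k - 1) (S : Finset (Fin m)) : e ∉ Rset H k S := by
  intro hmem
  have := hmem.1
  omega

lemma Rset_pred {H : Fin m → Hyp n} {k : ℕ} (hk1 : 1 ≤ k) {e : Fin m} (he : (e:ℕ) = k - 1)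
    (S : Finset (Fin m)) [Decidable (eact H e S)] :
    Rset H (k-1) S = if eact H e S then insert e (Rset H k S) else Rset H k S := by
  have hiff : ∀ i : Fin m, (k - 1 ≤ (i:ℕ)) ↔ (k ≤ (i:ℕ) ∨ i = e) := by
    intro i
    constructor
    · intro h
      rcases Nat.lt_or_ge (i : ℕ) k with h2 | h2
      · exact Or.inr (Fin.ext (by omega))
      · exact Or.inl h2
    · rintro (h | rfl)
      · omega
      · omega
  by_cases hA : eact H e S
  · rw [if_pos hA]
    ext i
    simp only [Rset, Set.mem_setOf_eq, Set.mem_insert_iff, hiff i]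
    constructor
    · rintro ⟨h1 | rfl, h2⟩
      · exact Or.inr ⟨h1, h2⟩
      · exact Or.inl rfl
    · rintro (rfl | ⟨h1, h2⟩)
      · exact ⟨Or.inr rfl, hA⟩
      · exact ⟨Or.inl h1, h2⟩
  · rw [if_neg hA]
    ext i
    simp only [Rset, Set.mem_setOf_eq, hiff i]
    constructor
    · rintro ⟨h1 | rfl, h2⟩
      · exact ⟨h1, h2⟩
      · exact absurd h2 hA
    · rintro ⟨h1, h2⟩
      exact ⟨Or.inl h1, h2⟩

lemma restCompl_pred_active {H : Fin m → Hyp n} {k : ℕ} (hk1 : 1 ≤ k) {e : Fin m}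
    (he : (e:ℕ) = k - 1) {S : Finset (Fin m)} (hact : eact H e S) :
    restCompl H (k-1) S = restCompl H k S \ (H e).carrier := by
  classical
  rw [restCompl_eq, restCompl_eq, Rset_pred hk1 he S, if_pos hact, Set.biUnion_insert,
    Set.union_comm, ← Set.diff_diff]

lemma restCompl_pred_inactive {H : Fin m → Hyp n} {k : ℕ} (hk1 : 1 ≤ k) {e : Fin m}
    (he : (e:ℕ) = k - 1) {S : Finset (Fin m)} (hact : ¬ eact H e S) :
    restCompl H (k-1) S = restCompl H k S := by
  classical
  rw [restCompl_eq, restCompl_eq, Rset_pred hk1 he S, if_neg hact]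

lemma mem_Ak {k : ℕ} {i : Fin m} : i ∈ Ak m k ↔ (i:ℕ) < k := by
  simp [Ak]


/-! ### dimension theory -/

lemma Fh_apply (Hi : Hyp n) (x : Fin n → ℝ) : Fh Hi x = ∑ i, Hi.a i * x i := rfl

noncomputable def rnk (H : Fin m → Hyp n) (S : Finset (Fin m)) : ℕ :=
  Module.finrank ℝ (Submodule.span ℝ ((fun i => (H i).a) '' (S : Set (Fin m))))

def dirS (H : Fin m → Hyp n) (S : Finset (Fin m)) : Submodule ℝ (Fin n → ℝ) where
  carrier := {v | ∀ i ∈ S, Fh (H i) v = 0}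
  add_mem' := by
    intro a b ha hb i hi
    rw [map_add, ha i hi, hb i hi, add_zero]
  zero_mem' := by
    intro i hi
    rw [map_zero]
  smul_mem' := by
    intro c v hv i hi
    rw [map_smul, hv i hi, smul_zero]

lemma mem_dirS {H : Fin m → Hyp n} {S : Finset (Fin m)} {v} :
    v ∈ dirS H S ↔ ∀ i ∈ S, Fh (H i) v = 0 := Iff.rfl

lemma dirS_antitone {H : Fin m → Hyp n} {S T : Finset (Fin m)} (h : S ⊆ T) :
    dirS H T ≤ dirS H S := fun v hv i hi => hv i (h hi)

lemma interA_coset {H : Fin m → Hyp n} {S : Finset (Fin m)} {x₀ : Fin n → ℝ}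
    (hx₀ : x₀ ∈ interA H S) :
    interA H S = (fun v => x₀ + v) '' (dirS H S : Set (Fin n → ℝ)) := by
  ext x
  constructor
  · intro hx
    refine ⟨x - x₀, fun i hi => ?_, by show x₀ + (x - x₀) = x; rw [← add_sub_assoc, add_sub_cancel_left]⟩
    rw [map_sub, mem_interA.1 hx i hi, mem_interA.1 hx₀ i hi, sub_self]
  · rintro ⟨v, hv, rfl⟩
    rw [mem_interA]
    intro i hi
    rw [map_add, mem_interA.1 hx₀ i hi, hv i hi, add_zero]

lemma vectorSpan_interA {H : Fin m → Hyp n} {S : Finset (Fin m)} {x₀ : Fin n → ℝ}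
    (hx₀ : x₀ ∈ interA H S) : vectorSpan ℝ (interA H S) = dirS H S := by
  apply le_antisymm
  · rw [vectorSpan, Submodule.span_le]
    rintro v hv
    rw [Set.mem_vsub] at hv
    obtain ⟨x, hx, y, hy, rfl⟩ := hv
    intro i hi
    show Fh (H i) (x - y) = 0
    rw [map_sub, mem_interA.1 hx i hi, mem_interA.1 hy i hi, sub_self]
  · intro v hv
    apply Submodule.subset_span
    rw [Set.mem_vsub]
    refine ⟨x₀ + v, ?_, x₀, hx₀, by show x₀ + v - x₀ = v; rw [add_sub_cancel_left]⟩
    rw [mem_interA]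
    intro i hi
    rw [map_add, mem_interA.1 hx₀ i hi, hv i hi, add_zero]

lemma finrank_dirS (H : Fin m → Hyp n) (S : Finset (Fin m)) :
    Module.finrank ℝ (dirS H S) = n - rnk H S ∧ rnk H S ≤ n := by
  classical
  set M : Matrix ((S : Set (Fin m)) : Type) (Fin n) ℝ := fun i j => (H i.1).a j with hM
  have hker : LinearMap.ker M.mulVecLin = dirS H S := by
    ext v
    constructor
    · intro h i hi
      have h2 := congrFun (LinearMap.mem_ker.1 h) ⟨i, hi⟩
      rw [Matrix.mulVecLin_apply] at h2
      simpa [hM, Matrix.mulVec, dotProduct, Fh_apply] using h2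
    · intro h
      rw [LinearMap.mem_ker]
      funext i
      have := h i.1 i.2
      rw [Matrix.mulVecLin_apply]
      simpa [hM, Matrix.mulVec, dotProduct, Fh_apply] using this
  have hrank : M.rank = rnk H S := by
    rw [← Matrix.rank_transpose, Matrix.rank, Matrix.range_mulVecLin,
      Matrix.col_transpose, rnk, Set.image_eq_range]
    rfl
  have hrn : rnk H S + Module.finrank ℝ (dirS H S) = n := by
    rw [← hrank, ← hker, Matrix.rank]
    have h3 := LinearMap.finrank_range_add_finrank_ker M.mulVecLin
    rwa [Module.finrank_pi, Fintype.card_fin] at h3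
  omega

lemma adim_interA {H : Fin m → Hyp n} {S : Finset (Fin m)}
    (hne : (interA H S).Nonempty) : adim (interA H S) = n - rnk H S := by
  obtain ⟨x₀, hx₀⟩ := hne
  rw [adim, vectorSpan_interA hx₀, (finrank_dirS H S).1]

lemma rnk_le_n (H : Fin m → Hyp n) (S : Finset (Fin m)) : rnk H S ≤ n :=
  (finrank_dirS H S).2

lemma rnk_mono {H : Fin m → Hyp n} {S T : Finset (Fin m)} (h : S ⊆ T) :
    rnk H S ≤ rnk H T :=
  Submodule.finrank_mono (Submodule.span_mono (Set.image_mono (by exact_mod_cast h)))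

lemma rnk_le_card (H : Fin m → Hyp n) (S : Finset (Fin m)) : rnk H S ≤ S.card := by
  classical
  have himg : (fun i => (H i).a) '' (S : Set (Fin m)) = ↑(S.image fun i => (H i).a) :=
    (Finset.coe_image).symm
  rw [rnk, himg]
  exact le_trans (finrank_span_finset_le_card _) Finset.card_image_le

lemma rnk_insert_le (H : Fin m → Hyp n) (S : Finset (Fin m)) (j : Fin m) :
    rnk H (insert j S) ≤ rnk H S + 1 := by
  classical
  rw [rnk, Finset.coe_insert, Set.image_insert_eq, Submodule.span_insert]
  have h1 : Module.finrank ℝ (Submodule.span ℝ {(H j).a}) = 1 :=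
    finrank_span_singleton (H j).ha
  have h2 := Submodule.finrank_sup_add_finrank_inf_eq (Submodule.span ℝ {(H j).a})
    (Submodule.span ℝ ((fun i => (H i).a) '' (S : Set (Fin m))))
  rw [rnk]
  omega

lemma interA_subset_carrier_of_rnk {H : Fin m → Hyp n} {S : Finset (Fin m)} {j : Fin m}
    (hne : (interA H (insert j S)).Nonempty) (hr : rnk H (insert j S) ≤ rnk H S) :
    interA H S ⊆ (H j).carrier := by
  obtain ⟨x₁, hx₁⟩ := hne
  have hx₁S : x₁ ∈ interA H S := interA_antitone (Finset.subset_insert j S) hx₁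
  have hdir : dirS H (insert j S) = dirS H S := by
    apply Submodule.eq_of_le_of_finrank_le (dirS_antitone (Finset.subset_insert j S))
    have h1 := finrank_dirS H S
    have h2 := finrank_dirS H (insert j S)
    omega
  have hset : interA H S = interA H (insert j S) := by
    rw [interA_coset hx₁S, interA_coset hx₁, hdir]
  rw [hset, interA_insert]
  exact Set.inter_subset_left


/-! ### NBC and circuits -/

lemma nbc_subset {H : Fin m → Hyp n} {S T : Finset (Fin m)} (hT : T ⊆ S)
    (hS : IsAffNBC H S) : IsAffNBC H T :=
  ⟨hS.1.mono (interA_antitone hT), fun C hC hne hsub => hS.2 C hC hne (hsub.trans hT)⟩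

lemma rnk_empty (H : Fin m → Hyp n) : rnk H ∅ = 0 := by
  simp [rnk]

lemma nbc_rnk {H : Fin m → Hyp n} {S : Finset (Fin m)} (hS : IsAffNBC H S) :
    ∀ T, T ⊆ S → rnk H T = T.card := by
  intro T
  induction T using Finset.strongInduction with
  | _ T ih =>
    intro hTS
    by_contra hne
    have hlt : rnk H T < T.card := lt_of_le_of_ne (rnk_le_card H T) hne
    have hT0 : T.Nonempty := by
      rcases Finset.eq_empty_or_nonempty T with rfl | h
      · rw [rnk_empty, Finset.card_empty] at hlt
        exact absurd hlt (lt_irrefl 0)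
      · exact h
    obtain ⟨t, ht⟩ := hT0
    have h1 : rnk H (T.erase t) = (T.erase t).card :=
      ih (T.erase t) (Finset.erase_ssubset ht) ((Finset.erase_subset t T).trans hTS)
    have h2 : rnk H (T.erase t) ≤ rnk H T := rnk_mono (Finset.erase_subset t T)
    have hcard : (T.erase t).card = T.card - 1 := Finset.card_erase_of_mem ht
    have hcard1 : 1 ≤ T.card := Finset.card_pos.2 ⟨t, ht⟩
    have hrT : rnk H T = T.card - 1 := by omega
    have hTne : (interA H T).Nonempty := hS.1.mono (interA_antitone hTS)
    have hcirc : IsAffCircuit H T := by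
      constructor
      · refine ⟨hTne, ?_⟩
        rw [adim_interA hTne, hrT]
        have := rnk_le_n H T
        omega
      · intro T' hT'
        rintro ⟨hT'ne, hT'eq⟩
        have heq : rnk H T' = T'.card := ih T' hT' (hT'.subset.trans hTS)
        rw [adim_interA hT'ne, heq] at hT'eq
        have := rnk_le_n H T'
        omega
    exact hS.2 T hcirc ⟨t, ht⟩ (((Finset.erase_subset _ _).trans hTS))

lemma no_containment {H : Fin m → Hyp n} {S : Finset (Fin m)} (hS : IsAffNBC H S)
    {j : Fin m} (hjgt : ∀ s ∈ S, (s:ℕ) < (j:ℕ)) (hsub : interA H S ⊆ (H j).carrier) :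
    False := by
  classical
  set F := S.powerset.filter (fun T => interA H T ⊆ (H j).carrier) with hF
  have hSF : S ∈ F :=
    Finset.mem_filter.2 ⟨Finset.mem_powerset.2 (Finset.Subset.refl S), hsub⟩
  obtain ⟨T, hTF, hTmin⟩ := Finset.exists_minimal (s := F) ⟨S, hSF⟩
  have hTF : T ∈ F := hTF
  rw [hF, Finset.mem_filter, Finset.mem_powerset] at hTF
  obtain ⟨hTS, hTsub⟩ := hTF
  have hjT : j ∉ T := fun hj => lt_irrefl _ (hjgt j (hTS hj))
  have hTne : (interA H T).Nonempty := hS.1.mono (interA_antitone hTS)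
  have hrT := nbc_rnk hS
  have hint : interA H (insert j T) = interA H T := by
    rw [interA_insert]
    exact Set.Subset.antisymm Set.inter_subset_right (fun x hx => ⟨hTsub hx, hx⟩)
  have hcne : (interA H (insert j T)).Nonempty := by rw [hint]; exact hTne
  have hcirc : IsAffCircuit H (insert j T) := by
    constructor
    · refine ⟨hcne, ?_⟩
      rw [hint, adim_interA hTne, hrT T hTS, Finset.card_insert_of_notMem hjT]
      have h1 := rnk_le_n H T
      rw [hrT T hTS] at h1
      omega
    · intro T' hT'
      rintro ⟨hT'ne, hT'eq⟩
      by_cases hjT' : j ∈ T'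
      · set T'' := T'.erase j with hT''def
        have hT''T : T'' ⊆ T := by
          intro i hi
          have hiT' := Finset.mem_of_mem_erase hi
          rcases Finset.mem_insert.1 (hT'.subset hiT') with rfl | h
          · exact absurd rfl (Finset.ne_of_mem_erase hi)
          · exact h
        have hT'insert : T' = insert j T'' := by
          rw [hT''def, Finset.insert_erase hjT']
        have hT''ne : T'' ≠ T := by
          intro h
          exact hT'.ne (by rw [hT'insert, h])
        have hT''ssub : T'' ⊂ T := lt_of_le_of_ne hT''T hT''ne
        have hT''notsub : ¬ interA H T'' ⊆ (H j).carrier := by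
          intro hc
          exact hT''ssub.not_ge (hTmin (Finset.mem_filter.2
            ⟨Finset.mem_powerset.2 (hT''T.trans hTS), hc⟩) hT''ssub.le)
        have hjT'' : j ∉ T'' := Finset.notMem_erase j T'
        have hT'ne' : (interA H (insert j T'')).Nonempty := by
          rw [← hT'insert]; exact hT'ne
        have hrnkgt : rnk H T'' < rnk H T' := by
          rw [hT'insert]
          rcases lt_or_ge (rnk H T'') (rnk H (insert j T'')) with h | h
          · exact h
          · exact absurd (interA_subset_carrier_of_rnk hT'ne' h) hT''notsub
        have hle := rnk_insert_le H T'' j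
        rw [← hT'insert] at hle
        have hr'' : rnk H T'' = T''.card := hrT T'' (hT''T.trans hTS)
        have hcard' : T'.card = T''.card + 1 := by
          rw [hT'insert, Finset.card_insert_of_notMem hjT'']
        rw [adim_interA hT'ne] at hT'eq
        have h1 := rnk_le_n H T'
        omega
      · have hT'T : T' ⊆ T := by
          intro i hi
          rcases Finset.mem_insert.1 (hT'.subset hi) with rfl | h
          · exact absurd hi hjT'
          · exact h
        have heq := hrT T' (hT'T.trans hTS)
        rw [adim_interA hT'ne, heq] at hT'eq
        have := rnk_le_n H T'
        omega
  have hne' : (insert j T).Nonempty := Finset.insert_nonempty j T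
  have hmax : (insert j T).max' hne' = j := by
    apply le_antisymm
    · apply Finset.max'_le
      intro y hy
      rcases Finset.mem_insert.1 hy with rfl | h
      · exact le_refl _
      · exact Fin.le_def.2 (le_of_lt (hjgt y (hTS h)))
    · exact Finset.le_max' _ j (Finset.mem_insert_self j T)
  exact hS.2 (insert j T) hcirc hne' (by rw [hmax, Finset.erase_insert hjT]; exact hTS)


/-! ### helper lemmas for the main theorem -/

lemma mem_hsd {H : Fin m → Hyp n} {R : Set (Fin m)} {x y : Fin n → ℝ} :
    y ∈ hsd H R x ↔ ∀ i ∈ R, y ∈ sd (H i) x := Set.mem_iInter₂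

lemma hsd_eq_of_mem {H : Fin m → Hyp n} {R : Set (Fin m)} {x y : Fin n → ℝ}
    (hy : y ∈ hsd H R x) : hsd H R y = hsd H R x :=
  Set.iInter₂_congr fun i hi => sd_eq_of_mem (mem_hsd.1 hy i hi)

lemma hsd_insert {H : Fin m → Hyp n} {R : Set (Fin m)} {e : Fin m} {x : Fin n → ℝ} :
    hsd H (insert e R) x = sd (H e) x ∩ hsd H R x := by
  rw [hsd, Set.biInter_insert]
  rfl

lemma mem_restCompl {H : Fin m → Hyp n} {k : ℕ} {S : Finset (Fin m)} {x} :
    x ∈ restCompl H k S ↔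
      x ∈ interA H S ∧ ∀ i ∈ Rset H k S, Fh (H i) x ≠ (H i).b := by
  rw [restCompl_eq]
  constructor
  · rintro ⟨h1, h2⟩
    exact ⟨h1, fun i hi hc => h2 (Set.mem_biUnion hi hc)⟩
  · rintro ⟨h1, h2⟩
    refine ⟨h1, fun hc => ?_⟩
    obtain ⟨i, hi, hci⟩ := Set.mem_iUnion₂.1 hc
    exact h2 i hi hci

lemma inter_hsd_subset {H : Fin m → Hyp n} {k : ℕ} {S : Finset (Fin m)} (x : Fin n → ℝ) :
    interA H S ∩ hsd H (Rset H k S) x ⊆ restCompl H k S := by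
  rintro y ⟨hy1, hy2⟩
  exact mem_restCompl.2 ⟨hy1, fun i hi => sd_ne_of_mem (mem_hsd.1 hy2 i hi)⟩

lemma self_mem_hsd {H : Fin m → Hyp n} {k : ℕ} {S : Finset (Fin m)} {x : Fin n → ℝ}
    (hx : x ∈ restCompl H k S) : x ∈ hsd H (Rset H k S) x :=
  mem_hsd.2 fun i hi => mem_sd_self ((mem_restCompl.1 hx).2 i hi)

lemma exists_on_carrier {s : Set (Fin n → ℝ)} (hconv : Convex ℝ s) {x z : Fin n → ℝ}
    (hx : x ∈ s) (hz : z ∈ s) {Hi : Hyp n} (h1 : Hi.b ≤ Fh Hi x) (h2 : Fh Hi z ≤ Hi.b) :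
    ∃ y ∈ s, Fh Hi y = Hi.b := by
  have hγ : Continuous (fun t : ℝ => x + t • (z - x)) :=
    continuous_const.add (continuous_id.smul continuous_const)
  have hg : ContinuousOn (fun t : ℝ => Fh Hi (x + t • (z - x))) (Set.Icc 0 1) :=
    ((Fh_cont Hi).comp hγ).continuousOn
  have h0 : Fh Hi (x + (0:ℝ) • (z - x)) = Fh Hi x := by rw [zero_smul, add_zero]
  have h1' : Fh Hi (x + (1:ℝ) • (z - x)) = Fh Hi z := by
    rw [one_smul, ← add_sub_assoc, add_sub_cancel_left]
  have hmem : Hi.b ∈ Set.Icc (Fh Hi (x + (1:ℝ) • (z - x))) (Fh Hi (x + (0:ℝ) • (z - x))) := by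
    rw [h0, h1']
    exact ⟨h2, h1⟩
  obtain ⟨t, ht, hteq⟩ := intermediate_value_Icc' (by norm_num : (0:ℝ) ≤ 1) hg hmem
  exact ⟨x + t • (z - x), hconv.add_smul_sub_mem hx hz ht, hteq⟩


/-! ### θ ∘ φ = id on ℬ_{k-1} -/

theorem theta_phi_id {H : Fin m → Hyp n} {k : ℕ} (hk1 : 1 ≤ k) {e : Fin m}
    (he : (e:ℕ) = k - 1) {p : Finset (Fin m) × Set (Fin n → ℝ)}
    (hp : p ∈ BFam H (k-1)) : thetaA H k e (phi H k e p) = p := by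
  classical
  obtain ⟨S, Δ⟩ := p
  obtain ⟨hSA, hnbc, x, hxU, hΔeq⟩ := hp
  simp only at hSA hnbc hxU hΔeq ⊢
  set W := interA H S with hWdef
  set R := Rset H k S with hRdef
  have heS : e ∉ S := fun h => by have := mem_Ak.1 (hSA h); omega
  have hSlt : ∀ s ∈ S, (s:ℕ) < (e:ℕ) := fun s hs => by
    have := mem_Ak.1 (hSA hs); omega
  have hWnot : ¬ W ⊆ (H e).carrier := fun h => no_containment hnbc hSlt h
  by_cases hact : eact H e S
  · -- e is active on S
    have hU : restCompl H (k-1) S = restCompl H k S \ (H e).carrier :=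
      restCompl_pred_active hk1 he hact
    have hxUk : x ∈ restCompl H k S := (by rw [hU] at hxU; exact hxU.1)
    have hxe_ne : Fh (H e) x ≠ (H e).b := by
      rw [hU] at hxU
      exact fun h => hxU.2 h
    have hRpred : Rset H (k-1) S = insert e R := by
      rw [Rset_pred hk1 he S, if_pos hact]
    have hΔeq2 : Δ = W ∩ (sd (H e) x ∩ hsd H R x) := by
      rw [hΔeq, cc_restCompl hxU, hRpred, hsd_insert]
    set Δ' := connectedComponentIn (restCompl H k S) x with hΔ'def
    have hccUk : Δ' = W ∩ hsd H R x := cc_restCompl hxUk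
    have hΔsub' : Δ ⊆ Δ' := by
      rw [hΔeq2, hccUk]
      exact fun y hy => ⟨hy.1, hy.2.2⟩
    have hxΔ : x ∈ Δ := by
      rw [hΔeq]
      exact mem_connectedComponentIn hxU
    have hcomp : compIn (restCompl H k S) Δ = Δ' := compIn_eq ⟨x, hxΔ⟩ hΔsub'
    have hΔ'conv : Convex ℝ Δ' := by
      rw [hccUk]
      exact (convex_interA H S).inter (convex_hsd H R x)
    have hxΔ' : x ∈ Δ' := mem_connectedComponentIn hxUk
    have hΔeq3 : Δ = Δ' ∩ sd (H e) x := by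
      rw [hΔeq2, hccUk, Set.inter_comm (sd (H e) x) (hsd H R x),
        ← Set.inter_assoc]
    by_cases heq : Δ' = Δ
    · -- Δ' = Δ : φ fixes, θ fixes
      have hΔsd : Δ ⊆ sd (H e) x := by
        rw [hΔeq3]
        exact Set.inter_subset_right
      have hΔne : ∀ y ∈ Δ, Fh (H e) y ≠ (H e).b := fun y hy => sd_ne_of_mem (hΔsd hy)
      have hcompΔ : compIn (restCompl H k S) Δ = Δ := by rw [hcomp, heq]
      have htheta : thetaA H k e (S, Δ) = (S, Δ) := by
        rw [thetaA, if_neg, if_pos]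
        · exact Set.eq_empty_iff_forall_notMem.2 fun y hy => hΔne y hy.1 hy.2
        · exact fun hsub => hΔne x hxΔ (hsub hxΔ)
      rcases Ne.lt_or_gt (hΔne x hxΔ) with hx_lt | hx_gt
      · have hΔneg : Δ ⊆ (H e).neg := by rw [← sd_neg_of hx_lt]; exact hΔsd
        have hnotpos : ¬ Δ ⊆ (H e).pos := fun h => absurd (h hxΔ) (not_lt.2 hx_lt.le)
        have hphi : phi H k e (S, Δ) = (S, Δ) := by
          rw [phi, if_neg (fun hc => hnotpos hc.1), if_neg (fun hc => hnotpos hc.1),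
            if_pos hΔneg]
          rw [hcompΔ]
        rw [hphi, htheta]
      · have hΔpos : Δ ⊆ (H e).pos := by rw [← sd_pos_of hx_gt]; exact hΔsd
        have hphi : phi H k e (S, Δ) = (S, Δ) := by
          rw [phi, if_neg, if_pos ⟨hΔpos, hcompΔ.symm⟩]
          rintro ⟨-, hne⟩
          exact hne hcompΔ.symm
        rw [hphi, htheta]
    · -- Δ' ≠ Δ
      rcases Ne.lt_or_gt hxe_ne with hx_lt | hx_gt
      · -- Δ on the negative side
        have hsdneg : sd (H e) x = (H e).neg := sd_neg_of hx_lt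
        have hnotsub : ¬ Δ' ⊆ (H e).neg := by
          intro hcon
          apply heq
          have hΔ'U : Δ' ⊆ restCompl H (k-1) S := by
            rw [hU]
            intro y hy
            exact ⟨connectedComponentIn_subset _ _ hy, fun hc => ne_of_lt (hcon hy) hc⟩
          have hsub2 := IsPreconnected.subset_connectedComponentIn
            isPreconnected_connectedComponentIn (mem_connectedComponentIn hxUk) hΔ'U
          rw [← hΔeq] at hsub2
          exact Set.Subset.antisymm hsub2 hΔsub'
        obtain ⟨z, hzΔ', hz⟩ := Set.not_subset.1 hnotsub
        have hzge : (H e).b ≤ Fh (H e) z := not_lt.1 hz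
        obtain ⟨w, hwΔ', hwb⟩ := exists_on_carrier hΔ'conv hzΔ' hxΔ' hzge hx_lt.le
        have hnotpos : ¬ Δ ⊆ (H e).pos := fun h => absurd (h hxΔ) (not_lt.2 hx_lt.le)
        have hΔneg : Δ ⊆ (H e).neg := by rw [hΔeq3, hsdneg]; exact Set.inter_subset_right
        have hphi : phi H k e (S, Δ) = (S, Δ') := by
          rw [phi, if_neg (fun hc => hnotpos hc.1), if_neg (fun hc => hnotpos hc.1),
            if_pos hΔneg, hcomp]
        rw [hphi]
        have hcompΔ' : compIn (restCompl H k S) Δ' = Δ' :=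
          compIn_eq ⟨x, hxΔ'⟩ subset_rfl
        rw [thetaA, if_neg, if_neg]
        · simp only [Finset.erase_eq_of_notMem heS]
          rw [hcompΔ']
          rw [← hsdneg, ← hΔeq3]
        · exact fun hc => (Set.eq_empty_iff_forall_notMem.1 hc) w ⟨hwΔ', hwb⟩
        · exact fun hsub => hxe_ne (hsub hxΔ')
      · -- Δ on the positive side
        have hsdpos : sd (H e) x = (H e).pos := sd_pos_of hx_gt
        have hnotsub : ¬ Δ' ⊆ (H e).pos := by
          intro hcon
          apply heq
          have hΔ'U : Δ' ⊆ restCompl H (k-1) S := by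
            rw [hU]
            intro y hy
            exact ⟨connectedComponentIn_subset _ _ hy, fun hc => ne_of_gt (hcon hy) hc⟩
          have hsub2 := IsPreconnected.subset_connectedComponentIn
            isPreconnected_connectedComponentIn (mem_connectedComponentIn hxUk) hΔ'U
          rw [← hΔeq] at hsub2
          exact Set.Subset.antisymm hsub2 hΔsub'
        obtain ⟨z, hzΔ', hz⟩ := Set.not_subset.1 hnotsub
        have hzle : Fh (H e) z ≤ (H e).b := not_lt.1 hz
        obtain ⟨w, hwΔ', hwb⟩ := exists_on_carrier hΔ'conv hxΔ' hzΔ' hx_gt.le hzle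
        have hΔpos : Δ ⊆ (H e).pos := by rw [hΔeq3, hsdpos]; exact Set.inter_subset_right
        have hΔnecomp : Δ ≠ compIn (restCompl H k S) Δ := by
          rw [hcomp]
          exact fun h => heq h.symm
        have hphi : phi H k e (S, Δ) = (insert e S, Δ' ∩ (H e).carrier) := by
          rw [phi, if_pos ⟨hΔpos, hΔnecomp⟩, hcomp]
        rw [hphi]
        have hcompΓ : compIn (restCompl H k S) (Δ' ∩ (H e).carrier) = Δ' :=
          compIn_eq ⟨w, hwΔ', hwb⟩ Set.inter_subset_left
        rw [thetaA, if_pos Set.inter_subset_right]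
        simp only [Finset.erase_insert heS]
        rw [hcompΓ, ← hsdpos, ← hΔeq3]
  · -- e inactive on S
    have hU : restCompl H (k-1) S = restCompl H k S := restCompl_pred_inactive hk1 he hact
    rw [hU] at hxU hΔeq
    have hxΔ : x ∈ Δ := hΔeq ▸ mem_connectedComponentIn hxU
    have hΔU : Δ ⊆ restCompl H k S := hΔeq ▸ connectedComponentIn_subset _ _
    have hcomp : compIn (restCompl H k S) Δ = Δ := by
      rw [hΔeq]
      exact (compIn_eq ⟨x, mem_connectedComponentIn hxU⟩ subset_rfl)
    have hWcar : W ∩ (H e).carrier = ∅ := by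
      by_contra hne
      exact hact ⟨Set.nonempty_iff_ne_empty.2 hne,
        fun heq2 => hWnot (Set.inter_eq_left.1 heq2)⟩
    have hΔne : ∀ y ∈ Δ, Fh (H e) y ≠ (H e).b := fun y hy hc =>
      Set.eq_empty_iff_forall_notMem.1 hWcar y ⟨(mem_restCompl.1 (hΔU hy)).1, hc⟩
    have hΔsd : Δ ⊆ sd (H e) x :=
      preconn_subset_sd (hΔeq ▸ isPreconnected_connectedComponentIn) hΔne hxΔ
    have htheta : thetaA H k e (S, Δ) = (S, Δ) := by
      rw [thetaA, if_neg, if_pos]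
      · exact Set.eq_empty_iff_forall_notMem.2 fun y hy => hΔne y hy.1 hy.2
      · exact fun hsub => hΔne x hxΔ (hsub hxΔ)
    rcases Ne.lt_or_gt (hΔne x hxΔ) with hx_lt | hx_gt
    · have hΔneg : Δ ⊆ (H e).neg := by rw [← sd_neg_of hx_lt]; exact hΔsd
      have hnotpos : ¬ Δ ⊆ (H e).pos := fun h => absurd (h hxΔ) (not_lt.2 hx_lt.le)
      have hphi : phi H k e (S, Δ) = (S, Δ) := by
        rw [phi, if_neg (fun hc => hnotpos hc.1), if_neg (fun hc => hnotpos hc.1),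
          if_pos hΔneg]
        rw [hcomp]
      rw [hphi, htheta]
    · have hΔpos : Δ ⊆ (H e).pos := by rw [← sd_pos_of hx_gt]; exact hΔsd
      have hphi : phi H k e (S, Δ) = (S, Δ) := by
        rw [phi, if_neg, if_pos ⟨hΔpos, hcomp.symm⟩]
        rintro ⟨-, hne⟩
        exact hne hcomp.symm
      rw [hphi, htheta]


/-! ### θ maps ℬ_k into ℬ_{k-1}, and φ ∘ θ = id on ℬ_k -/

theorem theta_mem_phi_id {H : Fin m → Hyp n} {k : ℕ} (hk1 : 1 ≤ k) {e : Fin m}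
    (he : (e:ℕ) = k - 1) {p : Finset (Fin m) × Set (Fin n → ℝ)} (hp : p ∈ BFam H k) :
    thetaA H k e p ∈ BFam H (k-1) ∧ phi H k e (thetaA H k e p) = p := by
  classical
  obtain ⟨S, Δ⟩ := p
  obtain ⟨hSA, hnbc, x, hxU, hΔeq⟩ := hp
  simp only at hSA hnbc hxU hΔeq ⊢
  set W := interA H S with hWdef
  set R := Rset H k S with hRdef
  have hSlt : ∀ s ∈ S, (s:ℕ) < k := fun s hs => mem_Ak.1 (hSA hs)
  have hxΔ : x ∈ Δ := hΔeq ▸ mem_connectedComponentIn hxU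
  have hΔU : Δ ⊆ restCompl H k S := hΔeq ▸ connectedComponentIn_subset _ _
  have hΔW : Δ ⊆ W := fun y hy => (mem_restCompl.1 (hΔU hy)).1
  have hΔeq2 : Δ = W ∩ hsd H R x := by rw [hΔeq, cc_restCompl hxU]
  have hΔconn : IsPreconnected Δ := hΔeq ▸ isPreconnected_connectedComponentIn
  have hxW : x ∈ W := hΔW hxΔ
  have hxhsd : x ∈ hsd H R x := self_mem_hsd hxU
  have hcompΔ : compIn (restCompl H k S) Δ = Δ := by
    rw [compIn_eq ⟨x, hxΔ⟩ hΔeq.le, ← hΔeq]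
  have hno : ∀ j : Fin m, k ≤ (j:ℕ) → ¬ W ⊆ (H j).carrier := fun j hj hsub =>
    no_containment hnbc (fun s hs => lt_of_lt_of_le (hSlt s hs) hj) hsub
  by_cases hc1 : Δ ⊆ (H e).carrier
  · -- case T1 : Δ ⊆ H_e, so e ∈ S
    have hWsub : W ⊆ (H e).carrier := by
      apply interA_subset_carrier (isOpen_hsd H R x) hxW hxhsd
      rw [← hΔeq2]
      exact hc1
    have heS : e ∈ S := by
      by_contra heS
      refine no_containment hnbc (fun s hs => ?_) hWsub
      have h1 := hSlt s hs
      have h2 : (s:ℕ) ≠ (e:ℕ) := fun h => heS (Fin.ext h ▸ hs)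
      omega
    set S' := S.erase e with hS'def
    have hS'sub : S' ⊆ S := Finset.erase_subset e S
    have hS'nbc : IsAffNBC H S' := nbc_subset hS'sub hnbc
    have hSinsert : S = insert e S' := (Finset.insert_erase heS).symm
    set W' := interA H S' with hW'def
    have hWW' : W = (H e).carrier ∩ W' := by rw [hWdef, hSinsert, interA_insert]
    have hWsubW' : W ⊆ W' := by rw [hWW']; exact Set.inter_subset_right
    set R' := Rset H k S' with hR'def
    have hS'lt : ∀ s ∈ S', (s:ℕ) < (e:ℕ) := fun s hs => by
      have h1 := hSlt s (hS'sub hs)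
      have h2 : s ≠ e := Finset.ne_of_mem_erase hs
      have h3 : (s:ℕ) ≠ (e:ℕ) := fun h => h2 (Fin.ext h)
      omega
    have hΔnei : ∀ i ∈ R', ∀ y ∈ Δ, Fh (H i) y ≠ (H i).b := by
      intro i hi y hy hcon
      have hik : k ≤ (i:ℕ) := hi.1
      by_cases hiR : i ∈ R
      · exact (mem_restCompl.1 (hΔU hy)).2 i hiR hcon
      · rw [hRdef, Rset] at hiR
        simp only [Set.mem_setOf_eq, not_and] at hiR
        have hA : (W ∩ (H i).carrier).Nonempty := ⟨y, hΔW hy, hcon⟩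
        have hB : W ∩ (H i).carrier = W := not_ne_iff.1 (hiR hik hA)
        exact hno i hik (Set.inter_eq_left.1 hB)
    have hΔU' : Δ ⊆ restCompl H k S' := fun y hy =>
      mem_restCompl.2 ⟨hWsubW' (hΔW hy), fun i hi => hΔnei i hi y hy⟩
    have hxU' : x ∈ restCompl H k S' := hΔU' hxΔ
    set Δ' := connectedComponentIn (restCompl H k S') x with hΔ'def
    have hccU' : Δ' = W' ∩ hsd H R' x := cc_restCompl hxU'
    have hΔsubΔ' : Δ ⊆ Δ' := hΔconn.subset_connectedComponentIn hxΔ hΔU'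
    have hcompΔ' : compIn (restCompl H k S') Δ = Δ' := compIn_eq ⟨x, hxΔ⟩ hΔsubΔ'
    have hxcar : Fh (H e) x = (H e).b := hc1 hxΔ
    have hWnot' : ¬ W' ⊆ (H e).carrier := no_containment hS'nbc hS'lt
    obtain ⟨w, hwW', hwcar⟩ := Set.not_subset.1 hWnot'
    have hxW' : x ∈ W' := hWsubW' hxW
    have hxhsd' : x ∈ hsd H R' x := self_mem_hsd hxU'
    obtain ⟨⟨y, hymem, hygt⟩, -⟩ :=
      exists_pt_side (isOpen_hsd H R' x) hxW' hxhsd' hwW' hxcar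
        (fun hcon => hwcar hcon)
    obtain ⟨hyW', hyhsd'⟩ := hymem
    have hyΔ' : y ∈ Δ' := by rw [hccU']; exact ⟨hyW', hyhsd'⟩
    have hact' : eact H e S' :=
      ⟨⟨x, hxW', hxcar⟩, fun hcon => hWnot' (Set.inter_eq_left.1 hcon)⟩
    have hU'' : restCompl H (k-1) S' = restCompl H k S' \ (H e).carrier :=
      restCompl_pred_active hk1 he hact'
    have hR'pred : Rset H (k-1) S' = insert e R' := by
      rw [Rset_pred hk1 he S', if_pos hact']
    have hyU' : y ∈ restCompl H k S' := inter_hsd_subset x ⟨hyW', hyhsd'⟩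
    have hyU'' : y ∈ restCompl H (k-1) S' := by
      rw [hU'']
      exact ⟨hyU', fun hcon => (ne_of_gt hygt) hcon⟩
    have hccy : connectedComponentIn (restCompl H (k-1) S') y = Δ' ∩ (H e).pos := by
      rw [cc_restCompl hyU'', hR'pred, hsd_insert, sd_pos_of hygt,
        hsd_eq_of_mem hyhsd', hccU', Set.inter_comm ((H e).pos), ← Set.inter_assoc]
    have htheta : thetaA H k e (S, Δ) = (S', Δ' ∩ (H e).pos) := by
      rw [thetaA, if_pos hc1]
      show (S.erase e, compIn (restCompl H k (S.erase e)) Δ ∩ (H e).pos) = _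
      rw [← hS'def, hcompΔ']
    have hmem : (S', Δ' ∩ (H e).pos) ∈ BFam H (k-1) := by
      refine ⟨?_, hS'nbc, ?_⟩
      · intro s hs
        rw [mem_Ak]
        have h1 := hS'lt s hs
        omega
      · exact ⟨y, hyU'', hccy.symm⟩
    have hsub1 : Δ' ∩ (H e).pos ⊆ (H e).pos := Set.inter_subset_right
    have hsubcc : Δ' ∩ (H e).pos ⊆ connectedComponentIn (restCompl H k S') x :=
      Set.inter_subset_left
    have hcompΓ : compIn (restCompl H k S') (Δ' ∩ (H e).pos) = Δ' :=
      compIn_eq (U := restCompl H k S') (x := x) (Γ := Δ' ∩ (H e).pos) ⟨y, ⟨hyΔ', hygt⟩⟩ hsubcc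
    have hxΔ' : x ∈ Δ' := mem_connectedComponentIn hxU'
    have hne1 : Δ' ∩ (H e).pos ≠ compIn (restCompl H k S') (Δ' ∩ (H e).pos) := by
      rw [hcompΓ]
      intro hcon
      have hx2 : x ∈ Δ' ∩ (H e).pos := by rw [hcon]; exact hxΔ'
      exact (ne_of_gt hx2.2) hxcar
    have hphi : phi H k e (S', Δ' ∩ (H e).pos) = (insert e S', Δ' ∩ (H e).carrier) := by
      rw [phi, if_pos ⟨hsub1, hne1⟩]
      show (insert e S', compIn (restCompl H k S') (Δ' ∩ (H e).pos) ∩ (H e).carrier) = _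
      rw [hcompΓ]
    have hfin2 : Δ' ∩ (H e).carrier = Δ := by
      apply Set.Subset.antisymm
      · rintro z ⟨hzΔ', hzc⟩
        rw [hΔeq2]
        rw [hccU'] at hzΔ'
        refine ⟨by rw [hWW']; exact ⟨hzc, hzΔ'.1⟩, ?_⟩
        have hRR' : R ⊆ R' := by
          intro i hi
          refine ⟨hi.1, ?_, ?_⟩
          · obtain ⟨u, hu⟩ := hi.2.1
            exact ⟨u, hWsubW' hu.1, hu.2⟩
          · intro hcon
            have hWi : W ⊆ (H i).carrier := fun u hu =>
              (Set.inter_eq_left.1 hcon) (hWsubW' hu)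
            exact hi.2.2 (Set.inter_eq_left.2 hWi)
        exact mem_hsd.2 fun i hiR => mem_hsd.1 hzΔ'.2 i (hRR' hiR)
      · exact fun z hz => ⟨hΔsubΔ' hz, hc1 hz⟩
    rw [htheta]
    refine ⟨hmem, ?_⟩
    rw [hphi, ← hSinsert, hfin2]
  · -- e ∉ S
    have heS : e ∉ S := fun h => hc1 (fun y hy => mem_interA.1 (hΔW hy) e h)
    have hSA' : S ⊆ Ak m (k-1) := fun s hs => by
      rw [mem_Ak]
      have h1 := hSlt s hs
      have h2 : (s:ℕ) ≠ (e:ℕ) := fun h => heS (Fin.ext h ▸ hs)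
      omega
    have herase : S.erase e = S := Finset.erase_eq_of_notMem heS
    have hWnot : ¬ W ⊆ (H e).carrier := no_containment hnbc (fun s hs => by
      have h1 := mem_Ak.1 (hSA' hs)
      omega)
    by_cases hc2 : Δ ∩ (H e).carrier = ∅
    · -- case T2
      have hΔne : ∀ y ∈ Δ, Fh (H e) y ≠ (H e).b := fun y hy hcon =>
        Set.eq_empty_iff_forall_notMem.1 hc2 y ⟨hy, hcon⟩
      have htheta : thetaA H k e (S, Δ) = (S, Δ) := by
        rw [thetaA, if_neg hc1, if_pos hc2]
      have hΔsd : Δ ⊆ sd (H e) x := preconn_subset_sd hΔconn hΔne hxΔ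
      have hreg : IsRegionIn (restCompl H (k-1) S) Δ := by
        by_cases hact : eact H e S
        · have hU : restCompl H (k-1) S = restCompl H k S \ (H e).carrier :=
            restCompl_pred_active hk1 he hact
          have hxU'' : x ∈ restCompl H (k-1) S := by
            rw [hU]
            exact ⟨hxU, fun hcon => hΔne x hxΔ hcon⟩
          refine ⟨x, hxU'', ?_⟩
          rw [cc_restCompl hxU'', Rset_pred hk1 he S, if_pos hact, hsd_insert,
            Set.inter_comm (sd (H e) x), ← Set.inter_assoc, ← hΔeq2]
          exact (Set.inter_eq_left.2 hΔsd).symm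
        · have hU : restCompl H (k-1) S = restCompl H k S := restCompl_pred_inactive hk1 he hact
          rw [hU]
          exact ⟨x, hxU, hΔeq⟩
      have hmem : (S, Δ) ∈ BFam H (k-1) := ⟨hSA', hnbc, hreg⟩
      rcases Ne.lt_or_gt (hΔne x hxΔ) with hx_lt | hx_gt
      · have hΔneg : Δ ⊆ (H e).neg := by rw [← sd_neg_of hx_lt]; exact hΔsd
        have hnotpos : ¬ Δ ⊆ (H e).pos := fun h => absurd (h hxΔ) (not_lt.2 hx_lt.le)
        have hphi : phi H k e (S, Δ) = (S, Δ) := by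
          rw [phi, if_neg (fun hc => hnotpos hc.1), if_neg (fun hc => hnotpos hc.1),
            if_pos hΔneg]
          show (S, compIn (restCompl H k S) Δ) = _
          rw [hcompΔ]
        rw [htheta]
        exact ⟨hmem, hphi⟩
      · have hΔpos : Δ ⊆ (H e).pos := by rw [← sd_pos_of hx_gt]; exact hΔsd
        have hphi : phi H k e (S, Δ) = (S, Δ) := by
          rw [phi, if_neg, if_pos ⟨hΔpos, hcompΔ.symm⟩]
          rintro ⟨-, hne⟩
          exact hne hcompΔ.symm
        rw [htheta]
        exact ⟨hmem, hphi⟩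
    · -- case T3
      obtain ⟨z, hzΔ, hzc⟩ := Set.nonempty_iff_ne_empty.2 hc2
      obtain ⟨w, hwW, hwc⟩ := Set.not_subset.1 hWnot
      have hzhsd : z ∈ hsd H R x := (hΔeq2 ▸ hzΔ).2
      obtain ⟨-, ⟨y, hymem, hylt⟩⟩ :=
        exists_pt_side (isOpen_hsd H R x) (hΔW hzΔ) hzhsd hwW hzc
          (fun hcon => hwc hcon)
      obtain ⟨hyW, hyhsd⟩ := hymem
      have hyΔ : y ∈ Δ := by rw [hΔeq2]; exact ⟨hyW, hyhsd⟩
      have hact : eact H e S :=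
        ⟨⟨z, hΔW hzΔ, hzc⟩, fun hcon => hWnot (Set.inter_eq_left.1 hcon)⟩
      have hU'' : restCompl H (k-1) S = restCompl H k S \ (H e).carrier :=
        restCompl_pred_active hk1 he hact
      have hyU'' : y ∈ restCompl H (k-1) S := by
        rw [hU'']
        exact ⟨hΔU hyΔ, fun hcon => (ne_of_lt hylt) hcon⟩
      have hccy : connectedComponentIn (restCompl H (k-1) S) y = Δ ∩ (H e).neg := by
        rw [cc_restCompl hyU'', Rset_pred hk1 he S, if_pos hact, hsd_insert,
          sd_neg_of hylt, hsd_eq_of_mem hyhsd, Set.inter_comm ((H e).neg),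
          ← Set.inter_assoc, ← hΔeq2]
      have htheta : thetaA H k e (S, Δ) = (S, Δ ∩ (H e).neg) := by
        rw [thetaA, if_neg hc1, if_neg hc2]
        show (S, compIn (restCompl H k (S.erase e)) Δ ∩ (H e).neg) = _
        rw [herase, hcompΔ]
      have hmem : (S, Δ ∩ (H e).neg) ∈ BFam H (k-1) := ⟨hSA', hnbc, y, hyU'', hccy.symm⟩
      have hsubneg : Δ ∩ (H e).neg ⊆ (H e).neg := Set.inter_subset_right
      have hnotpos : ¬ Δ ∩ (H e).neg ⊆ (H e).pos := fun h =>
        absurd (h ⟨hyΔ, hylt⟩) (not_lt.2 hylt.le)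
      have hcompΓ : compIn (restCompl H k S) (Δ ∩ (H e).neg) = Δ := by
        rw [compIn_eq (U := restCompl H k S) (Γ := Δ ∩ (H e).neg) (x := x) ⟨y, ⟨hyΔ, hylt⟩⟩ (Set.inter_subset_left.trans hΔeq.le), ← hΔeq]
      have hphi : phi H k e (S, Δ ∩ (H e).neg) = (S, Δ) := by
        rw [phi, if_neg (fun hc => hnotpos hc.1), if_neg (fun hc => hnotpos hc.1),
          if_pos hsubneg]
        show (S, compIn (restCompl H k S) (Δ ∩ (H e).neg)) = _
        rw [hcompΓ]
      rw [htheta]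
      exact ⟨hmem, hphi⟩


end Arr


/-- **`θ_k` is a two-sided inverse of `φ_k`**: `θ_k` maps `ℬ_k` into `ℬ_{k−1}`,
`θ_k ∘ φ_k` is the identity on `ℬ_{k−1}`, and `φ_k ∘ θ_k` is the identity on `ℬ_k`. -/
theorem stmt_14 (n m : ℕ) (H : Fin m → Hyp n)
    (hinj : Function.Injective fun i => (H i).carrier)
    (k : ℕ) (hk1 : 1 ≤ k) (hkm : k ≤ m) :
    Set.MapsTo (thetaA H k ⟨k - 1, by omega⟩) (BFam H k) (BFam H (k - 1)) ∧
    (∀ p ∈ BFam H (k - 1),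
      thetaA H k ⟨k - 1, by omega⟩ (phi H k ⟨k - 1, by omega⟩ p) = p) ∧
    (∀ p ∈ BFam H k,
      phi H k ⟨k - 1, by omega⟩ (thetaA H k ⟨k - 1, by omega⟩ p) = p) := by
  refine ⟨?_, ?_, ?_⟩
  · intro p hp
    exact (Arr.theta_mem_phi_id hk1 rfl hp).1
  · intro p hp
    exact Arr.theta_phi_id hk1 rfl hp
  · intro p hp
    exact (Arr.theta_mem_phi_id hk1 rfl hp).2
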